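/- Let c ∈ (0, 1/3) and let v¹, …, vⁿ be unit vectors in ℝⁿ with (vⁱ, vʲ) ≤ c for all i ≠ j, indexed (as is always possible) so that ‖P_{ℓ−1} v^ℓ‖ = min{‖P_{ℓ−1} v^k‖ : ℓ ≤ k ≤ n} for all ℓ, where P_m denotes orthogonal projection onto span{v¹,…,v^m}. Suppose m is such that ‖P_m v^{m+1}‖ > (3c)^{1/2} and there exist K = 2 + ⌈1/c⌉ indices m < i₁ < … < i_K ≤ n with ‖P_m(v^{i_a} − v^{i_b})‖ ≤ c for all a, b ≤ K. Then a contradiction follows; i.e., under these hypotheses no such configuration exists, because the unit vectors x^a = (I−P_m)v^{i_a}/‖(I−P_m)v^{i_a}‖ satisfy (x^a, x^b) ≤ −c for all a ≠ b, and K unit vectors with pairwise inner products ≤ −c cannot exist when c(K−1) > 1. -/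

import Mathlib

set_option maxHeartbeats 800000


/-- Let `c ∈ (0,1/3)` and `v¹,…,vⁿ` be unit vectors in `ℝⁿ` with pairwise
inner products `≤ c`, indexed so that `‖P_{ℓ−1} v^ℓ‖` is minimal among `‖P_{ℓ−1} v^k‖`,
`k ≥ ℓ` (here `P m` is orthogonal projection onto the span of the first `m` vectors).
If for some `m` one has `‖P_m v^{m+1}‖ > (3c)^{1/2}` and there exist `K = 2 + ⌈1/c⌉`
indices `i₁ < … < i_K` beyond `m` with `‖P_m (v^{i_a} − v^{i_b})‖ ≤ c` for all `a, b`,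
then a contradiction follows. -/
theorem no_cluster_beyond_projection_threshold
    (n : ℕ) (c : ℝ) (hc0 : 0 < c) (hc1 : c < 1 / 3)
    (v : Fin n → EuclideanSpace ℝ (Fin n))
    (hunit : ∀ i, ‖v i‖ = 1)
    (hip : ∀ i j, i ≠ j → (inner ℝ (v i) (v j) : ℝ) ≤ c)
    (P : ℕ → EuclideanSpace ℝ (Fin n) → EuclideanSpace ℝ (Fin n))
    (hP : ∀ (m : ℕ) (x : EuclideanSpace ℝ (Fin n)),
      P m x = (Submodule.orthogonalProjectionOnto
        (Submodule.span ℝ (v '' {j : Fin n | (j : ℕ) < m})) x : EuclideanSpace ℝ (Fin n)))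
    (hindex : ∀ ℓ k : Fin n, ℓ ≤ k → ‖P (ℓ : ℕ) (v ℓ)‖ ≤ ‖P (ℓ : ℕ) (v k)‖)
    (m : ℕ) (hm : m < n)
    (hbig : Real.sqrt (3 * c) < ‖P m (v ⟨m, hm⟩)‖)
    (ι : Fin (2 + ⌈1 / c⌉₊) → Fin n)
    (hmono : StrictMono ι)
    (hgt : ∀ a, m ≤ (ι a : ℕ))
    (hclose : ∀ a b, ‖P m (v (ι a) - v (ι b))‖ ≤ c) :
    False := by
  classical
  set S : Submodule ℝ (EuclideanSpace ℝ (Fin n)) :=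
    Submodule.span ℝ (v '' {j : Fin n | (j : ℕ) < m}) with hS
  set u : Fin (2 + ⌈1 / c⌉₊) → EuclideanSpace ℝ (Fin n) := fun a => P m (v (ι a)) with hu
  set w : Fin (2 + ⌈1 / c⌉₊) → EuclideanSpace ℝ (Fin n) :=
    fun a => v (ι a) - P m (v (ι a)) with hw
  have hPmem : ∀ x, P m x ∈ S := fun x => by rw [hP]; exact Submodule.coe_mem _
  have hwmem : ∀ a, w a ∈ Sᗮ := fun a => by
    simp only [hw, hP]
    exact Submodule.sub_starProjection_mem_orthogonal _
  have horth : ∀ a b, (inner ℝ (u a) (w b) : ℝ) = 0 := fun a b =>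
    (Submodule.mem_orthogonal S (w b)).mp (hwmem b) (u a) (hPmem _)
  have horth' : ∀ a b, (inner ℝ (w a) (u b) : ℝ) = 0 := fun a b => by
    rw [real_inner_comm]; exact horth b a
  have hpyth : ∀ a, ‖u a‖ ^ 2 + ‖w a‖ ^ 2 = 1 := by
    intro a
    have h1 : u a + w a = v (ι a) := by simp [hu, hw]
    have h2 := norm_add_sq_real (u a) (w a)
    rw [h1, hunit, horth a a] at h2
    nlinarith [h2]
  have hproj : ∀ a, 3 * c < ‖u a‖ ^ 2 := by
    intro a
    have hle : ‖P m (v ⟨m, hm⟩)‖ ≤ ‖u a‖ := by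
      have := hindex ⟨m, hm⟩ (ι a) (by simpa [Fin.le_def] using hgt a)
      simpa [hu] using this
    have h2 : Real.sqrt (3 * c) < ‖u a‖ := lt_of_lt_of_le hbig hle
    nlinarith [Real.sq_sqrt (by positivity : (0:ℝ) ≤ 3 * c), Real.sqrt_nonneg (3 * c)]
  have hPsub : ∀ x y, P m (x - y) = P m x - P m y := fun x y => by
    simp [hP, map_sub]
  have huip : ∀ a b, a ≠ b → 3 * c - c ^ 2 / 2 ≤ (inner ℝ (u a) (u b) : ℝ) := by
    intro a b hab
    have hsq : ‖u a - u b‖ ^ 2 ≤ c ^ 2 := by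
      have h1 : ‖u a - u b‖ ≤ c := by
        have h2 := hclose a b
        rw [hPsub] at h2
        simpa [hu] using h2
      nlinarith [norm_nonneg (u a - u b)]
    have hpol := norm_sub_sq_real (u a) (u b)
    nlinarith [hproj a, hproj b]
  have hwip : ∀ a b, a ≠ b → (inner ℝ (w a) (w b) : ℝ) ≤ -c := by
    intro a b hab
    have hvab : (inner ℝ (v (ι a)) (v (ι b)) : ℝ) ≤ c :=
      hip _ _ (fun h => hab (hmono.injective h))
    have hdecomp : (inner ℝ (v (ι a)) (v (ι b)) : ℝ)
        = inner ℝ (u a) (u b) + inner ℝ (w a) (w b) := by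
      have h1 : v (ι a) = u a + w a := by simp [hu, hw]
      have h2 : v (ι b) = u b + w b := by simp [hu, hw]
      rw [h1, h2, inner_add_left, inner_add_right, inner_add_right, horth a b, horth' a b]
      ring
    have h3 := huip a b hab
    nlinarith
  have hwnorm : ∀ a, (inner ℝ (w a) (w a) : ℝ) ≤ 1 := by
    intro a
    rw [real_inner_self_eq_norm_sq]
    nlinarith [hpyth a, sq_nonneg ‖u a‖]
  have h0 : (0:ℝ) ≤ ∑ a, ∑ b, (inner ℝ (w a) (w b) : ℝ) := by
    have h1 : (0:ℝ) ≤ (inner ℝ (∑ a, w a) (∑ b, w b) : ℝ) := real_inner_self_nonneg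
    rw [sum_inner] at h1
    simpa [inner_sum] using h1
  have h2 : ∑ a, ∑ b, (inner ℝ (w a) (w b) : ℝ)
      ≤ ∑ a : Fin (2 + ⌈1 / c⌉₊), ∑ b : Fin (2 + ⌈1 / c⌉₊), (if a = b then (1:ℝ) else -c) := by
    apply Finset.sum_le_sum; intro a _
    apply Finset.sum_le_sum; intro b _
    by_cases hab : a = b
    · subst hab; simpa using hwnorm a
    · simpa [hab] using hwip a b hab
  have h3 : ∑ a : Fin (2 + ⌈1 / c⌉₊), ∑ b : Fin (2 + ⌈1 / c⌉₊), (if a = b then (1:ℝ) else -c)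
      = ((2 + ⌈1 / c⌉₊ : ℕ) : ℝ) * ((1 + c) - c * ((2 + ⌈1 / c⌉₊ : ℕ) : ℝ)) := by
    have hrow : ∀ a : Fin (2 + ⌈1 / c⌉₊), ∑ b : Fin (2 + ⌈1 / c⌉₊), (if a = b then (1:ℝ) else -c)
        = (1 + c) - c * ((2 + ⌈1 / c⌉₊ : ℕ) : ℝ) := by
      intro a
      have hsplit : ∀ b : Fin (2 + ⌈1 / c⌉₊),
          (if a = b then (1:ℝ) else -c) = (if a = b then (1 + c : ℝ) else 0) + (-c) := by
        intro b
        by_cases h : a = b <;> simp [h]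
      rw [Finset.sum_congr rfl fun b _ => hsplit b, Finset.sum_add_distrib,
        Finset.sum_ite_eq Finset.univ a (fun _ => (1 + c : ℝ)), Finset.sum_const,
        Finset.card_univ, Fintype.card_fin]
      simp only [Finset.mem_univ, if_true, nsmul_eq_mul]
      push_cast
      ring
    rw [Finset.sum_congr rfl fun a _ => hrow a, Finset.sum_const, Finset.card_univ,
      Fintype.card_fin]
    simp only [nsmul_eq_mul]
  have hfinal : (0:ℝ) ≤ ((2 + ⌈1 / c⌉₊ : ℕ) : ℝ)
      * ((1 + c) - c * ((2 + ⌈1 / c⌉₊ : ℕ) : ℝ)) := by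
    exact ((h0.trans h2).trans_eq h3)
  have h4 : (1:ℝ) / c ≤ (⌈1 / c⌉₊ : ℝ) := Nat.le_ceil _
  have h6 : c * (1 / c) = 1 := by field_simp
  have hcK : 1 + 2 * c ≤ c * ((2 + ⌈1 / c⌉₊ : ℕ) : ℝ) := by push_cast; nlinarith
  have hK2 : (2:ℝ) ≤ ((2 + ⌈1 / c⌉₊ : ℕ) : ℝ) := by
    push_cast; linarith [Nat.cast_nonneg (α := ℝ) ⌈1 / c⌉₊]
  nlinarith [hfinal, hcK, hK2, hc0]
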